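/- Let G, H be groups acting on V via commuting representations ρ₁, τ₁ and on W via commuting representations ρ₂, τ₂. Let F be a G-equivariant and H-invariant frame with finite values. If Φ : V → W is H-equivariant (Φ(τ₁(h)X) = τ₂(h)Φ(X) for all h ∈ H), then ⟨Φ⟩_F(X) = (1/|F(X)|) Σ_{g ∈ F(X)} ρ₂(g)Φ(ρ₁(g)⁻¹X) satisfies ⟨Φ⟩_F(τ₁(h)ρ₁(g)X) = τ₂(h)ρ₂(g)⟨Φ⟩_F(X) for all g ∈ G, h ∈ H, X ∈ V, i.e., ⟨Φ⟩_F is G × H equivariant. -/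

import Mathlib

/-- If the frame is `G`-equivariant and `H`-invariant, the actions commute on both spaces and
`Φ` is `H`-equivariant, then the frame average of `Φ` is `G × H` equivariant. -/
theorem frame_average_second_symmetry_equivariant {G H V W : Type*} [Group G] [Group H]
    [DecidableEq G] [AddCommGroup W] [Module ℝ W]
    (ρ₁ : G →* Equiv.Perm V)
    (τ₁ : H →* Equiv.Perm V)
    (ρ₂ : Representation ℝ G W)
    (τ₂ : Representation ℝ H W)
    (hcomm₁ : ∀ (g : G) (h : H) (X : V), ρ₁ g (τ₁ h X) = τ₁ h (ρ₁ g X))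
    (hcomm₂ : ∀ (g : G) (h : H) (w : W), ρ₂ g (τ₂ h w) = τ₂ h (ρ₂ g w))
    (F : V → Finset G)
    (hne : ∀ X : V, (F X).Nonempty)
    (hGequi : ∀ (g : G) (X : V), F (ρ₁ g X) = (F X).image (fun k => g * k))
    (hHinv : ∀ (h : H) (X : V), F (τ₁ h X) = F X)
    (Φ : V → W)
    (hΦ : ∀ (h : H) (X : V), Φ (τ₁ h X) = τ₂ h (Φ X))
    (g : G) (h : H) (X : V) :
    (((F (τ₁ h (ρ₁ g X))).card : ℝ))⁻¹ •
        ∑ k ∈ F (τ₁ h (ρ₁ g X)), ρ₂ k (Φ (ρ₁ k⁻¹ (τ₁ h (ρ₁ g X))))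
      = τ₂ h (ρ₂ g ((((F X).card : ℝ))⁻¹ • ∑ k ∈ F X, ρ₂ k (Φ (ρ₁ k⁻¹ X)))) := by
  have hcomm₁' : ∀ (g : G) (h : H) (Y : V), ρ₁ g⁻¹ (τ₁ h Y) = τ₁ h (ρ₁ g⁻¹ Y) := by
    intro g h Y
    exact hcomm₁ g⁻¹ h Y
  rw [hHinv, hGequi]
  rw [Finset.card_image_of_injective _ (mul_right_injective g)]
  rw [Finset.sum_image (by intro a _ b _ hab; exact mul_left_cancel hab)]
  rw [map_smul, map_smul]
  congr 1
  rw [map_sum, map_sum]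
  apply Finset.sum_congr rfl
  intro k _
  have h1 : ρ₁ (g * k)⁻¹ (τ₁ h (ρ₁ g X)) = τ₁ h (ρ₁ k⁻¹ X) := by
    rw [hcomm₁' (g*k) h, mul_inv_rev, map_mul]
    simp only [Equiv.Perm.mul_apply]
    congr 1
    have : (ρ₁ g)⁻¹ (ρ₁ g X) = X := by simp
    rw [← map_inv] at this
    rw [this]
  rw [h1, hΦ, map_mul, Module.End.mul_apply, hcomm₂]
  exact hcomm₂ g h _
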